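/- Let T be a continuous linear operator on a separable Fréchet space. Then the following are equivalent: (a) for all nonempty open U₁, U₂, V₁, V₂ and every m there are x₁ ∈ U₁, x₂ ∈ U₂ and a, k with T^{a+jk}x_i ∈ V_i for 0 ≤ j ≤ m; (b) for all nonempty open U, V₁, V₂ and every m there exist x₁, x₂ ∈ U and a, k ∈ ℕ such that T^{a+jk} x₁ ∈ V₁ and T^{a+jk} x₂ ∈ V₂ for every 0 ≤ j ≤ m. -/

import Mathlib

open Filter Topology

theorem AP_transitive_pair_iff_single_source
    {X : Type*} [AddCommGroup X] [Module ℝ X] [UniformSpace X] [IsUniformAddGroup X]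
    [ContinuousSMul ℝ X] [LocallyConvexSpace ℝ X] [CompleteSpace X]
    [TopologicalSpace.MetrizableSpace X] [TopologicalSpace.SeparableSpace X]
    (T : X →L[ℝ] X) :
    (∀ U₁ U₂ V₁ V₂ : Set X, IsOpen U₁ → U₁.Nonempty → IsOpen U₂ → U₂.Nonempty →
        IsOpen V₁ → V₁.Nonempty → IsOpen V₂ → V₂.Nonempty → ∀ m : ℕ,
        ∃ x₁ ∈ U₁, ∃ x₂ ∈ U₂, ∃ a k : ℕ, 1 ≤ k ∧
          ∀ j ≤ m, (T ^ (a + j * k)) x₁ ∈ V₁ ∧ (T ^ (a + j * k)) x₂ ∈ V₂)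
    ↔ (∀ U V₁ V₂ : Set X, IsOpen U → U.Nonempty →
        IsOpen V₁ → V₁.Nonempty → IsOpen V₂ → V₂.Nonempty → ∀ m : ℕ,
        ∃ x₁ ∈ U, ∃ x₂ ∈ U, ∃ a k : ℕ, 1 ≤ k ∧
          ∀ j ≤ m, (T ^ (a + j * k)) x₁ ∈ V₁ ∧ (T ^ (a + j * k)) x₂ ∈ V₂) := by
  constructor
  · intro h U V₁ V₂ hU hUne hV₁ hV₁ne hV₂ hV₂ne m
    exact h U U V₁ V₂ hU hUne hU hUne hV₁ hV₁ne hV₂ hV₂ne m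
  · intro h U₁ U₂ V₁ V₂ hU₁ hU₁ne hU₂ hU₂ne hV₁ hV₁ne hV₂ hV₂ne m
    -- T has dense range
    have h1 : DenseRange (⇑T) := by
      rw [DenseRange, dense_iff_inter_open]
      intro V hV hVne
      obtain ⟨x, hx0, y0, hy0, a, k, hk, hj⟩ :=
        h Set.univ V V isOpen_univ ⟨0, trivial⟩ hV hVne hV hVne 1
      have hx : (T ^ (a + 1 * k)) x ∈ V := (hj 1 le_rfl).1
      have hak : a + 1 * k = (a + k - 1) + 1 := by omega
      refine ⟨(T ^ (a + 1 * k)) x, hx, (T ^ (a + k - 1)) x, ?_⟩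
      rw [hak, pow_succ']
      rfl
    -- T ^ a has dense range for every a
    have hdr : ∀ a : ℕ, DenseRange (⇑(T ^ a)) := by
      intro a
      induction a with
      | zero => simpa using denseRange_id
      | succ n ih =>
        have hcomp : DenseRange (⇑T ∘ ⇑(T ^ n)) := h1.comp ih T.continuous
        have : (T ^ (n + 1) : X →L[ℝ] X) = T * T ^ n := by
          rw [pow_succ']
        rw [this]
        exact hcomp
    -- Step 1: find a with T^a (U₁) ∩ U₂ ≠ ∅
    obtain ⟨y, hyU₁, y2, hy2, a, k, hk, hjk⟩ :=
      h U₁ U₂ U₂ hU₁ hU₁ne hU₂ hU₂ne hU₂ hU₂ne 0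
    have hya : (T ^ a) y ∈ U₂ := by simpa using (hjk 0 le_rfl).1
    set B : Set X := U₁ ∩ (⇑(T ^ a)) ⁻¹' U₂ with hB
    have hBopen : IsOpen B := hU₁.inter (hU₂.preimage (T ^ a).continuous)
    have hBne : B.Nonempty := ⟨y, hyU₁, by simpa using hya⟩
    -- Step 2: C = (T^a)⁻¹ V₂ is open nonempty since T^a has dense range
    set C : Set X := (⇑(T ^ a)) ⁻¹' V₂ with hC
    have hCopen : IsOpen C := hV₂.preimage (T ^ a).continuous
    have hCne : C.Nonempty := by
      obtain ⟨z, hz⟩ := (hdr a).exists_mem_open hV₂ hV₂ne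
      exact ⟨z, hz⟩
    -- Step 3: apply hypothesis on B with targets V₁ and C
    obtain ⟨z₁, hz₁, z₂, hz₂, p, q, hq, hP⟩ :=
      h B V₁ C hBopen hBne hV₁ hV₁ne hCopen hCne m
    refine ⟨z₁, hz₁.1, (T ^ a) z₂, hz₂.2, p, q, hq, fun j hj => ⟨(hP j hj).1, ?_⟩⟩
    have key : (T ^ (p + j * q)) ((T ^ a) z₂) = (T ^ a) ((T ^ (p + j * q)) z₂) := by
      rw [← ContinuousLinearMap.mul_apply, ← ContinuousLinearMap.mul_apply,
        ← pow_add, ← pow_add, Nat.add_comm]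
    rw [key]
    exact (hP j hj).2
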